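/- arXiv:1505.02344 — 2 statements merged into one kernel-verified Lean document; each statement's English description precedes it below -/
import Mathlib

section
/- An R-linear map τ : G → G satisfies τ(G) ⊆ Z(G) and τ([x,y]) = 0 for all x, y ∈ G if and only if there exist R-linear maps ℓA : A → Z(A), hB : B → Z(A), hA : A → Z(B), ℓB : B → Z(B), each vanishing on all commutators of its domain (ℓA([a,a']) = 0, hA([a,a']) = 0, hB([b,b']) = 0, ℓB([b,b']) = 0 for all a, a' ∈ A, b, b' ∈ B), such that τ(a + m + n + b) = (ℓA(a) + hB(b)) + (hA(a) + ℓB(b)) for all a ∈ A, m ∈ M, n ∈ N, b ∈ B, and the following hold: (a'') ℓA(a) + hA(a) ∈ Z(G) for all a ∈ A and hB(b) + ℓB(b) ∈ Z(G) for all b ∈ B; (b'') ℓA(mn) = hB(nm) and hA(mn) = ℓB(nm) for all m ∈ M, n ∈ N. -/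
/-- `x` lies in the Peirce corner `A = eGe`. -/
def cA {G : Type*} [Ring G] (e x : G) : Prop := e * x * e = x

/-- `x` lies in the Peirce corner `B = fGf`, where `f = 1 - e`. -/
def cB {G : Type*} [Ring G] (e x : G) : Prop := (1 - e) * x * (1 - e) = x

/-- `x` lies in the Peirce corner `M = eGf`. -/
def cM {G : Type*} [Ring G] (e x : G) : Prop := e * x * (1 - e) = x

/-- `x` lies in the Peirce corner `N = fGe`. -/
def cN {G : Type*} [Ring G] (e x : G) : Prop := (1 - e) * x * e = x

/-- `z` lies in the center `Z(G)`. -/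
def Ctr {G : Type*} [Ring G] (z : G) : Prop := ∀ x : G, z * x = x * z

private theorem corner_facts {G : Type*} [Ring G] {p q x : G}
    (hp : p * p = p) (hq : q * q = q) (hx : p * x * q = x) :
    p * x = x ∧ x * q = x ∧ (1 - p) * x = 0 ∧ x * (1 - q) = 0 := by
  have h1 : p * x = x := by rw [← hx, ← mul_assoc, ← mul_assoc, hp]
  have h2 : x * q = x := by rw [← hx, mul_assoc, hq]
  exact ⟨h1, h2, by rw [sub_mul, one_mul, h1, sub_self],
    by rw [mul_sub, mul_one, h2, sub_self]⟩

private theorem corner_proj {G : Type*} [Ring G] {p q : G}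
    (hp : p * p = p) (hq : q * q = q) (x : G) :
    p * (p * x * q) * q = p * x * q := by
  rw [← mul_assoc, ← mul_assoc, hp, mul_assoc, hq]

private theorem prodP {G : Type*} [Ring G] (p x y : G)
    (hx : p * x = x) (hy : y * p = y) : p * (x * y) * p = x * y := by
  rw [← mul_assoc, hx, mul_assoc, hy]

private theorem ctr_corner {G : Type*} [Ring G] {p z : G} (hp : p * p = p) (hz : Ctr z) :
    p * z * p = z * p := by
  rw [show p * z = z * p from (hz p).symm, mul_assoc, hp]

private theorem ctr_corner_comm {G : Type*} [Ring G] {p z x : G} (hp : p * p = p)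
    (hz : Ctr z) (hx1 : p * x = x) (hx2 : x * p = x) :
    (p * z * p) * x = x * (p * z * p) := by
  have h1 : z * p * x = x * z := by rw [mul_assoc, hx1, hz x]
  have h2 : x * (z * p) = x * z := by rw [← mul_assoc, ← hz x, mul_assoc, hx2, hz x]
  rw [ctr_corner hp hz, h1, h2]

private theorem ctr_decomp {G : Type*} [Ring G] {p z : G} (hp : p * p = p) (hz : Ctr z) :
    p * z * p + (1 - p) * z * (1 - p) = z := by
  have h2 : (1 - p) * (1 - p) = 1 - p := by
    rw [sub_mul, one_mul, mul_sub, mul_one, hp]; simp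
  rw [ctr_corner hp hz, ctr_corner h2 hz, ← mul_add]
  simp

private theorem ctr_add {G : Type*} [Ring G] {y z : G} (hy : Ctr y) (hz : Ctr z) :
    Ctr (y + z) := fun x => by rw [add_mul, mul_add, hy x, hz x]

/-- Proposition 2.1, part 3: an `R`-linear map `τ` on `G` is central-valued
and vanishes at commutators iff it has the presentation (2.3). -/
theorem stmt_2
    {R : Type*} [CommRing R] {G : Type*} [Ring G] [Algebra R G]
    (e : G) (he : e * e = e) (he0 : e ≠ 0) (he1 : e ≠ 1)
    (hM2 : ∀ x : G, cM e x → x + x = 0 → x = 0)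
    (hN2 : ∀ x : G, cN e x → x + x = 0 → x = 0)
    (τ : G →ₗ[R] G) :
    ((∀ x : G, Ctr (τ x)) ∧ (∀ x y : G, τ (x * y - y * x) = 0)) ↔
      ∃ ℓA hB hA ℓB : G →ₗ[R] G,
        (∀ a : G, cA e a → cA e (ℓA a) ∧ ∀ x : G, cA e x → ℓA a * x = x * ℓA a) ∧
        (∀ b : G, cB e b → cA e (hB b) ∧ ∀ x : G, cA e x → hB b * x = x * hB b) ∧
        (∀ a : G, cA e a → cB e (hA a) ∧ ∀ x : G, cB e x → hA a * x = x * hA a) ∧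
        (∀ b : G, cB e b → cB e (ℓB b) ∧ ∀ x : G, cB e x → ℓB b * x = x * ℓB b) ∧
        (∀ a a' : G, cA e a → cA e a' → ℓA (a * a' - a' * a) = 0) ∧
        (∀ a a' : G, cA e a → cA e a' → hA (a * a' - a' * a) = 0) ∧
        (∀ b b' : G, cB e b → cB e b' → hB (b * b' - b' * b) = 0) ∧
        (∀ b b' : G, cB e b → cB e b' → ℓB (b * b' - b' * b) = 0) ∧
        (∀ a m n b : G, cA e a → cM e m → cN e n → cB e b →
          τ (a + m + n + b) = (ℓA a + hB b) + (hA a + ℓB b)) ∧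
        (∀ a : G, cA e a → Ctr (ℓA a + hA a)) ∧
        (∀ b : G, cB e b → Ctr (hB b + ℓB b)) ∧
        (∀ m n : G, cM e m → cN e n → ℓA (m * n) = hB (n * m)) ∧
        (∀ m n : G, cM e m → cN e n → hA (m * n) = ℓB (n * m)) := by
  have hf2 : ((1:G) - e) * ((1:G) - e) = 1 - e := by
    rw [sub_mul, one_mul, mul_sub, mul_one, he]; simp
  constructor
  · rintro ⟨hctr, hcom⟩
    set PA : G →ₗ[R] G := (LinearMap.mulRight R e).comp (LinearMap.mulLeft R e) with hPA
    set PB : G →ₗ[R] G :=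
      (LinearMap.mulRight R (1-e)).comp (LinearMap.mulLeft R (1-e)) with hPB
    have eL1 : ∀ x, (PA.comp (τ.comp PA)) x = e * τ (e * x * e) * e := fun x => rfl
    have eL2 : ∀ x, (PA.comp (τ.comp PB)) x = e * τ ((1-e) * x * (1-e)) * e := fun x => rfl
    have eL3 : ∀ x, (PB.comp (τ.comp PA)) x = (1-e) * τ (e * x * e) * (1-e) := fun x => rfl
    have eL4 : ∀ x, (PB.comp (τ.comp PB)) x = (1-e) * τ ((1-e) * x * (1-e)) * (1-e) :=
      fun x => rfl
    refine ⟨PA.comp (τ.comp PA), PA.comp (τ.comp PB), PB.comp (τ.comp PA),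
      PB.comp (τ.comp PB), ?_, ?_, ?_, ?_, ?_, ?_, ?_, ?_, ?_, ?_, ?_, ?_, ?_⟩
    · intro a ha
      have ha' : e * a * e = a := ha
      constructor
      · show e * _ * e = _
        rw [eL1, ha']
        exact corner_proj he he (τ a)
      · intro x hx
        have hx' := corner_facts he he hx
        rw [eL1, ha']
        exact ctr_corner_comm he (hctr a) hx'.1 hx'.2.1
    · intro b hb
      have hb' : (1-e) * b * (1-e) = b := hb
      constructor
      · show e * _ * e = _
        rw [eL2, hb']
        exact corner_proj he he (τ b)
      · intro x hx
        have hx' := corner_facts he he hx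
        rw [eL2, hb']
        exact ctr_corner_comm he (hctr b) hx'.1 hx'.2.1
    · intro a ha
      have ha' : e * a * e = a := ha
      constructor
      · show (1-e) * _ * (1-e) = _
        rw [eL3, ha']
        exact corner_proj hf2 hf2 (τ a)
      · intro x hx
        have hx' := corner_facts hf2 hf2 hx
        rw [eL3, ha']
        exact ctr_corner_comm hf2 (hctr a) hx'.1 hx'.2.1
    · intro b hb
      have hb' : (1-e) * b * (1-e) = b := hb
      constructor
      · show (1-e) * _ * (1-e) = _
        rw [eL4, hb']
        exact corner_proj hf2 hf2 (τ b)
      · intro x hx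
        have hx' := corner_facts hf2 hf2 hx
        rw [eL4, hb']
        exact ctr_corner_comm hf2 (hctr b) hx'.1 hx'.2.1
    · intro a a' ha ha'
      have f1 := corner_facts he he ha
      have f2 := corner_facts he he ha'
      have hprod : e * (a * a' - a' * a) * e = a * a' - a' * a := by
        rw [mul_sub, sub_mul, prodP e a a' f1.1 f2.2.1, prodP e a' a f2.1 f1.2.1]
      rw [eL1, hprod, hcom a a']
      simp
    · intro a a' ha ha'
      have f1 := corner_facts he he ha
      have f2 := corner_facts he he ha'
      have hprod : e * (a * a' - a' * a) * e = a * a' - a' * a := by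
        rw [mul_sub, sub_mul, prodP e a a' f1.1 f2.2.1, prodP e a' a f2.1 f1.2.1]
      rw [eL3, hprod, hcom a a']
      simp
    · intro b b' hb hb'
      have f1 := corner_facts hf2 hf2 hb
      have f2 := corner_facts hf2 hf2 hb'
      have hprod : (1-e) * (b * b' - b' * b) * (1-e) = b * b' - b' * b := by
        rw [mul_sub (1-e) (b*b') (b'*b), sub_mul ((1-e)*(b*b')) ((1-e)*(b'*b)) (1-e),
          prodP (1-e) b b' f1.1 f2.2.1, prodP (1-e) b' b f2.1 f1.2.1]
      rw [eL2, hprod, hcom b b']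
      simp
    · intro b b' hb hb'
      have f1 := corner_facts hf2 hf2 hb
      have f2 := corner_facts hf2 hf2 hb'
      have hprod : (1-e) * (b * b' - b' * b) * (1-e) = b * b' - b' * b := by
        rw [mul_sub (1-e) (b*b') (b'*b), sub_mul ((1-e)*(b*b')) ((1-e)*(b'*b)) (1-e),
          prodP (1-e) b b' f1.1 f2.2.1, prodP (1-e) b' b f2.1 f1.2.1]
      rw [eL4, hprod, hcom b b']
      simp
    · intro a m n b ha hm hn hb
      have ha' : e * a * e = a := ha
      have hb' : (1-e) * b * (1-e) = b := hb
      have fm := corner_facts he hf2 hm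
      have fn := corner_facts hf2 he hn
      have hme : m * e = 0 := by
        have := fm.2.2.2; rwa [sub_sub_cancel] at this
      have hen : e * n = 0 := by
        have := fn.2.2.1; rwa [sub_sub_cancel] at this
      have τm0 : τ m = 0 := by
        have hm1 : e * m - m * e = m := by rw [fm.1, hme, sub_zero]
        rw [← hm1]; exact hcom e m
      have τn0 : τ n = 0 := by
        have hn1 : n * e - e * n = n := by rw [fn.2.1, hen, sub_zero]
        rw [← hn1]; exact hcom n e
      have da := ctr_decomp he (hctr a)
      have db := ctr_decomp he (hctr b)
      rw [eL1, eL2, eL3, eL4, ha', hb']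
      calc τ (a + m + n + b) = τ a + τ m + τ n + τ b := by rw [map_add, map_add, map_add]
        _ = τ a + τ b := by rw [τm0, τn0]; abel
        _ = (e * τ a * e + (1-e) * τ a * (1-e)) + (e * τ b * e + (1-e) * τ b * (1-e)) := by
            rw [da, db]
        _ = (e * τ a * e + e * τ b * e) + ((1-e) * τ a * (1-e) + (1-e) * τ b * (1-e)) := by
            abel
    · intro a ha
      have ha' : e * a * e = a := ha
      rw [eL1, eL3, ha', ctr_decomp he (hctr a)]
      exact hctr a
    · intro b hb
      have hb' : (1-e) * b * (1-e) = b := hb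
      rw [eL2, eL4, hb', ctr_decomp he (hctr b)]
      exact hctr b
    · intro m n hm hn
      have fm := corner_facts he hf2 hm
      have fn := corner_facts hf2 he hn
      have h1 : e * (m * n) * e = m * n := prodP e m n fm.1 fn.2.1
      have h2 : (1-e) * (n * m) * (1-e) = n * m := prodP (1-e) n m fn.1 fm.2.1
      have h3 : τ (m * n) = τ (n * m) :=
        sub_eq_zero.mp (by rw [← map_sub]; exact hcom m n)
      rw [eL1, eL2, h1, h2, h3]
    · intro m n hm hn
      have fm := corner_facts he hf2 hm
      have fn := corner_facts hf2 he hn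
      have h1 : e * (m * n) * e = m * n := prodP e m n fm.1 fn.2.1
      have h2 : (1-e) * (n * m) * (1-e) = n * m := prodP (1-e) n m fn.1 fm.2.1
      have h3 : τ (m * n) = τ (n * m) :=
        sub_eq_zero.mp (by rw [← map_sub]; exact hcom m n)
      rw [eL3, eL4, h1, h2, h3]
  · rintro ⟨ℓA, hB, hA, ℓB, g1, g2, g3, g4, cA1, cA2, cB1, cB2, pres, ctrA, ctrB, bb1, bb2⟩
    have decomp : ∀ x : G,
        x = e*x*e + e*x*(1-e) + (1-e)*x*e + (1-e)*x*(1-e) := by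
      intro x; noncomm_ring
    have key : ∀ u v : G,
        (e*u*e)*(e*v*e) + (e*u*(1-e))*((1-e)*v*e) = e*(u*v)*e := by
      intro u v
      have hee : ∀ w : G, e*(e*w) = e*w := fun w => by rw [← mul_assoc, he]
      have hffw : ∀ w : G, (1-e)*((1-e)*w) = (1-e)*w := fun w => by rw [← mul_assoc, hf2]
      simp only [mul_assoc, hee, hffw]
      rw [← mul_add, ← mul_add, ← add_mul]
      simp
    have key2 : ∀ u v : G,
        ((1-e)*u*(1-e))*((1-e)*v*(1-e)) + ((1-e)*u*e)*(e*v*(1-e)) = (1-e)*(u*v)*(1-e) := by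
      intro u v
      have hee : ∀ w : G, e*(e*w) = e*w := fun w => by rw [← mul_assoc, he]
      have hffw : ∀ w : G, (1-e)*((1-e)*w) = (1-e)*w := fun w => by rw [← mul_assoc, hf2]
      simp only [mul_assoc, hee, hffw]
      rw [← mul_add, ← mul_add, ← add_mul]
      simp
    constructor
    · intro x
      have hp := pres (e*x*e) (e*x*(1-e)) ((1-e)*x*e) ((1-e)*x*(1-e))
        (corner_proj he he x) (corner_proj he hf2 x) (corner_proj hf2 he x)
        (corner_proj hf2 hf2 x)
      rw [← decomp x] at hp
      rw [hp]
      have c1 := ctrA _ (corner_proj he he x)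
      have c2 := ctrB _ (corner_proj hf2 hf2 x)
      have hre : (ℓA (e*x*e) + hB ((1-e)*x*(1-e))) + (hA (e*x*e) + ℓB ((1-e)*x*(1-e)))
          = (ℓA (e*x*e) + hA (e*x*e)) + (hB ((1-e)*x*(1-e)) + ℓB ((1-e)*x*(1-e))) := by
        abel
      rw [hre]
      exact ctr_add c1 c2
    · intro x y
      have hp := pres (e*(x*y-y*x)*e) (e*(x*y-y*x)*(1-e)) ((1-e)*(x*y-y*x)*e)
        ((1-e)*(x*y-y*x)*(1-e))
        (corner_proj he he _) (corner_proj he hf2 _) (corner_proj hf2 he _)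
        (corner_proj hf2 hf2 _)
      rw [← decomp (x*y - y*x)] at hp
      have hXY : e*(x*y - y*x)*e =
          ((e*x*e)*(e*y*e) - (e*y*e)*(e*x*e))
          + ((e*x*(1-e))*((1-e)*y*e) - (e*y*(1-e))*((1-e)*x*e)) := by
        rw [mul_sub, sub_mul, ← key x y, ← key y x]; abel
      have hXYf : (1-e)*(x*y - y*x)*(1-e) =
          (((1-e)*x*(1-e))*((1-e)*y*(1-e)) - ((1-e)*y*(1-e))*((1-e)*x*(1-e)))
          + (((1-e)*x*e)*(e*y*(1-e)) - ((1-e)*y*e)*(e*x*(1-e))) := by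
        rw [mul_sub (1-e) (x*y) (y*x), sub_mul ((1-e)*(x*y)) ((1-e)*(y*x)) (1-e),
          ← key2 x y, ← key2 y x]
        abel
      rw [hp, hXY, hXYf]
      have z1 := cA1 _ _ (corner_proj he he x) (corner_proj he he y)
      have z2 := cA2 _ _ (corner_proj he he x) (corner_proj he he y)
      have z3 := cB1 _ _ (corner_proj hf2 hf2 x) (corner_proj hf2 hf2 y)
      have z4 := cB2 _ _ (corner_proj hf2 hf2 x) (corner_proj hf2 hf2 y)
      have w1 := bb1 _ _ (corner_proj he hf2 x) (corner_proj hf2 he y)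
      have w2 := bb1 _ _ (corner_proj he hf2 y) (corner_proj hf2 he x)
      have w3 := bb2 _ _ (corner_proj he hf2 x) (corner_proj hf2 he y)
      have w4 := bb2 _ _ (corner_proj he hf2 y) (corner_proj hf2 he x)
      simp only [map_add]
      rw [z1, z2, z3, z4]
      simp only [map_sub]
      rw [w1, w2, w3, w4]
      abel
end

section
/- Let L be a Lie derivation of G. Then L is proper if and only if there exist R-linear maps ℓA : A → Z(A) and ℓB : B → Z(B) such that: (A) P − ℓA is a derivation of A and Q − ℓB is a derivation of B; (B) ℓA(a) + hA(a) ∈ Z(G) for all a ∈ A, and hB(b) + ℓB(b) ∈ Z(G) for all b ∈ B; (C) ℓA(mn) = hB(nm) and ℓB(nm) = hA(mn) for all m ∈ M, n ∈ N. -/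
namespace Stmt3Aux

lemma mar {G : Type*} [Ring G] {x y z : G} (h : x * y = z) (t : G) :
    x * (y * t) = z * t := by rw [← mul_assoc, h]

lemma comb1 {G : Type*} [AddCommGroup G] {x y a b : G} (h : a = b)
    (key : x = y + (a - b)) : x = y := by
  rw [key, sub_eq_zero.mpr h, add_zero]

lemma comb2 {G : Type*} [AddCommGroup G] {x y a b c d : G} (h1 : a = b) (h2 : c = d)
    (key : x = y + (a - b) + (c - d)) : x = y := by
  rw [key, sub_eq_zero.mpr h1, sub_eq_zero.mpr h2, add_zero, add_zero]

lemma comb3 {G : Type*} [AddCommGroup G] {x y a b c d u v : G} (h1 : a = b) (h2 : c = d)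
    (h3 : u = v) (key : x = y + (a - b) + (c - d) + (u - v)) : x = y := by
  rw [key, sub_eq_zero.mpr h1, sub_eq_zero.mpr h2, sub_eq_zero.mpr h3,
    add_zero, add_zero, add_zero]

lemma comb4 {G : Type*} [AddCommGroup G] {x y a b c d u v p q : G} (h1 : a = b) (h2 : c = d)
    (h3 : u = v) (h4 : p = q)
    (key : x = y + (a - b) + (c - d) + (u - v) + (p - q)) : x = y := by
  rw [key, sub_eq_zero.mpr h1, sub_eq_zero.mpr h2, sub_eq_zero.mpr h3, sub_eq_zero.mpr h4,
    add_zero, add_zero, add_zero, add_zero]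

lemma comb5 {G : Type*} [AddCommGroup G] {x y a1 b1 a2 b2 a3 b3 a4 b4 a5 b5 : G}
    (h1 : a1 = b1) (h2 : a2 = b2) (h3 : a3 = b3) (h4 : a4 = b4) (h5 : a5 = b5)
    (key : x = y + (a1 - b1) + (a2 - b2) + (a3 - b3) + (a4 - b4) + (a5 - b5)) : x = y := by
  rw [key, sub_eq_zero.mpr h1, sub_eq_zero.mpr h2, sub_eq_zero.mpr h3, sub_eq_zero.mpr h4,
    sub_eq_zero.mpr h5, add_zero, add_zero, add_zero, add_zero, add_zero]

lemma mul0A {G : Type*} [Ring G] {e x y : G} (hx : x * e = x) (hy : e * y = 0) :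
    x * y = 0 := by rw [← hx, mul_assoc, hy, mul_zero]

lemma cornerMul {G : Type*} [Ring G] {u v x y : G} (hx : u * x = x) (hy : y * v = y) :
    u * (x * y) * v = x * y := by
  rw [← mul_assoc, hx, mul_assoc, hy]

lemma mul0B {G : Type*} [Ring G] {e x y : G} (hx : x * e = 0) (hy : e * y = y) :
    x * y = 0 := by rw [← hy, ← mul_assoc, hx, zero_mul]

/-- corner facts for `A`, in `f`-form. -/
lemma cAf {G : Type*} [Ring G] {e f a : G} (he : e * e = e) (hf : f = 1 - e)
    (ha : e * a * e = a) :
    e * a = a ∧ a * e = a ∧ f * a = 0 ∧ a * f = 0 := by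
  have h1 : e * a = a := by
    conv_lhs => rw [← ha]
    rw [← mul_assoc, ← mul_assoc, he, ha]
  have h2 : a * e = a := by
    conv_lhs => rw [← ha]
    rw [mul_assoc, he, ha]
  refine ⟨h1, h2, ?_, ?_⟩
  · rw [hf, sub_mul, one_mul, h1, sub_self]
  · rw [hf, mul_sub, mul_one, h2, sub_self]

lemma cMf {G : Type*} [Ring G] {e f m : G} (he : e * e = e) (hf : f = 1 - e)
    (hm : e * m * (1 - e) = m) :
    e * m = m ∧ m * e = 0 ∧ f * m = 0 ∧ m * f = m := by
  have hff : (1 - e) * (1 - e) = 1 - e := by simp [sub_mul, mul_sub, he]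
  have h1 : e * m = m := by
    conv_lhs => rw [← hm]
    rw [← mul_assoc, ← mul_assoc, he, hm]
  have h2 : m * (1 - e) = m := by
    conv_lhs => rw [← hm]
    rw [mul_assoc, hff, hm]
  have h3 : m * e = 0 := by
    have := congrArg (fun t => m - t) h2
    simp only [mul_sub, mul_one, sub_sub_cancel, sub_self] at this
    exact this
  refine ⟨h1, h3, ?_, by rw [hf]; exact h2⟩
  rw [hf, sub_mul, one_mul, h1, sub_self]

lemma cNf {G : Type*} [Ring G] {e f n : G} (he : e * e = e) (hf : f = 1 - e)
    (hn : (1 - e) * n * e = n) :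
    e * n = 0 ∧ n * e = n ∧ f * n = n ∧ n * f = 0 := by
  have hff : (1 - e) * (1 - e) = 1 - e := by simp [sub_mul, mul_sub, he]
  have h2 : n * e = n := by
    conv_lhs => rw [← hn]
    rw [mul_assoc, he, hn]
  have h1 : (1 - e) * n = n := by
    conv_lhs => rw [← hn]
    rw [← mul_assoc, ← mul_assoc, hff, hn]
  have h3 : e * n = 0 := by
    have := congrArg (fun t => n - t) h1
    simp only [sub_mul, one_mul, sub_sub_cancel, sub_self] at this
    exact this
  refine ⟨h3, h2, by rw [hf]; exact h1, ?_⟩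
  rw [hf, mul_sub, mul_one, h2, sub_self]

lemma cBf {G : Type*} [Ring G] {e f b : G} (he : e * e = e) (hf : f = 1 - e)
    (hb : (1 - e) * b * (1 - e) = b) :
    e * b = 0 ∧ b * e = 0 ∧ f * b = b ∧ b * f = b := by
  have hff : (1 - e) * (1 - e) = 1 - e := by simp [sub_mul, mul_sub, he]
  have h1 : (1 - e) * b = b := by
    conv_lhs => rw [← hb]
    rw [← mul_assoc, ← mul_assoc, hff, hb]
  have h2 : b * (1 - e) = b := by
    conv_lhs => rw [← hb]
    rw [mul_assoc, hff, hb]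
  refine ⟨?_, ?_, by rw [hf]; exact h1, by rw [hf]; exact h2⟩
  · have := congrArg (fun t => b - t) h1
    simp only [sub_mul, one_mul, sub_sub_cancel, sub_self] at this
    exact this
  · have := congrArg (fun t => b - t) h2
    simp only [mul_sub, mul_one, sub_sub_cancel, sub_self] at this
    exact this

lemma sandApply {R : Type*} [CommRing R] {G : Type*} [Ring G] [Algebra R G]
    (u v : G) (T : G →ₗ[R] G) (x : G) :
    ((LinearMap.mulLeft R u).comp ((LinearMap.mulRight R v).comp T)) x = u * (T x * v) := rfl

end Stmt3Aux

/-- `L` is a Lie derivation of `G` (with respect to the commutator `[x,y] = xy - yx`). -/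
def IsLieDer {R : Type*} [CommRing R] {G : Type*} [Ring G] [Algebra R G]
    (L : G →ₗ[R] G) : Prop :=
  ∀ x y : G, L (x * y - y * x) = L x * y - y * L x + (x * L y - L y * x)

/-- `D` is a derivation of `G`. -/
def IsDer {R : Type*} [CommRing R] {G : Type*} [Ring G] [Algebra R G]
    (D : G →ₗ[R] G) : Prop :=
  ∀ x y : G, D (x * y) = D x * y + x * D y

/-- `L` is a proper Lie derivation: `L = D + τ` for a derivation `D` and a central-valued
`τ` vanishing on all commutators. -/
def IsProper {R : Type*} [CommRing R] {G : Type*} [Ring G] [Algebra R G]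
    (L : G →ₗ[R] G) : Prop :=
  ∃ D τ : G →ₗ[R] G, IsDer D ∧ (∀ x : G, Ctr (τ x)) ∧
    (∀ x y : G, τ (x * y - y * x) = 0) ∧ L = D + τ

set_option maxHeartbeats 2000000 in
open Stmt3Aux in
/-- Theorem 2.2: a Lie derivation `L` of `G` is proper iff there exist
`R`-linear maps `ℓA : A → Z(A)` and `ℓB : B → Z(B)` satisfying (A), (B), (C), where
`P a = e L(a) e`, `hA a = f L(a) f`, `Q b = f L(b) f`, `hB b = e L(b) e`. -/
theorem stmt_3
    {R : Type*} [CommRing R] {G : Type*} [Ring G] [Algebra R G]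
    (e : G) (he : e * e = e) (he0 : e ≠ 0) (he1 : e ≠ 1)
    (hM2 : ∀ x : G, cM e x → x + x = 0 → x = 0)
    (hN2 : ∀ x : G, cN e x → x + x = 0 → x = 0)
    (L : G →ₗ[R] G) (hL : IsLieDer L) :
    IsProper L ↔
      ∃ ℓA ℓB : G →ₗ[R] G,
        (∀ a : G, cA e a → cA e (ℓA a) ∧ ∀ x : G, cA e x → ℓA a * x = x * ℓA a) ∧
        (∀ b : G, cB e b → cB e (ℓB b) ∧ ∀ x : G, cB e x → ℓB b * x = x * ℓB b) ∧
        -- (A) : `P - ℓA` is a derivation of `A` and `Q - ℓB` is a derivation of `B`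
        (∀ a a' : G, cA e a → cA e a' →
          e * L (a * a') * e - ℓA (a * a') =
            (e * L a * e - ℓA a) * a' + a * (e * L a' * e - ℓA a')) ∧
        (∀ b b' : G, cB e b → cB e b' →
          (1 - e) * L (b * b') * (1 - e) - ℓB (b * b') =
            ((1 - e) * L b * (1 - e) - ℓB b) * b' +
              b * ((1 - e) * L b' * (1 - e) - ℓB b')) ∧
        -- (B)
        (∀ a : G, cA e a → Ctr (ℓA a + (1 - e) * L a * (1 - e))) ∧
        (∀ b : G, cB e b → Ctr (e * L b * e + ℓB b)) ∧
        -- (C)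
        (∀ m n : G, cM e m → cN e n → ℓA (m * n) = e * L (n * m) * e) ∧
        (∀ m n : G, cM e m → cN e n → ℓB (n * m) = (1 - e) * L (m * n) * (1 - e)) := by
    classical
  obtain ⟨f, hf⟩ : ∃ f : G, f = 1 - e := ⟨_, rfl⟩
  have hef : e * f = 0 := by rw [hf, mul_sub, mul_one, he, sub_self]
  have hfe : f * e = 0 := by rw [hf, sub_mul, one_mul, he, sub_self]
  have hff : f * f = f := by rw [hf]; simp [mul_sub, sub_mul, he]
  have hef1 : e + f = 1 := by rw [hf]; abel
  rw [show (1 : G) - e = f from hf.symm]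
  constructor
  · -- easy direction
    rintro ⟨D, τ, hD, hC, h0, hLD⟩
    have hLx : ∀ x : G, L x = D x + τ x := fun x => by rw [hLD]; rfl
    have hD1 : D 1 = 0 := by
      have h1 := hD 1 1
      rw [one_mul, mul_one, one_mul] at h1
      have h2 : D 1 + D 1 = D 1 + 0 := by rw [add_zero, ← h1]
      exact (add_left_cancel h2)
    have hCr : ∀ y x : G, τ y * x = x * τ y := fun y x => hC y x
    -- vanishing of far corners of D on corner elements
    have hfDaf : ∀ a : G, cA e a → f * (D a * f) = 0 := by
      intro a ha
      obtain ⟨ea, ae, fa, af⟩ := cAf he hf ha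
      have h1 : D a = D e * a + e * D a := by rw [← hD e a, ea]
      rw [h1]
      simp only [add_mul, mul_add, mul_assoc, af, mul_zero, mar hfe, zero_mul, add_zero]
    have heDbe : ∀ b : G, cB e b → e * (D b * e) = 0 := by
      intro b hb
      obtain ⟨eb, be, fb, bf⟩ := cBf he hf hb
      have h1 : D b = D f * b + f * D b := by rw [← hD f b, fb]
      rw [h1]
      simp only [add_mul, mul_add, mul_assoc, be, mul_zero, mar hef, zero_mul, add_zero]
    have heDnme : ∀ m n : G, cM e m → cN e n → e * (D (n * m) * e) = 0 := by
      intro m n hm hn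
      obtain ⟨em, me, fm, mf⟩ := cMf he hf hm
      obtain ⟨en, ne', fn, nf⟩ := cNf he hf hn
      rw [hD n m]
      simp only [add_mul, mul_add, mul_assoc, me, mul_zero, mar en, zero_mul, add_zero]
    have hfDmnf : ∀ m n : G, cM e m → cN e n → f * (D (m * n) * f) = 0 := by
      intro m n hm hn
      obtain ⟨em, me, fm, mf⟩ := cMf he hf hm
      obtain ⟨en, ne', fn, nf⟩ := cNf he hf hn
      rw [hD m n]
      simp only [add_mul, mul_add, mul_assoc, nf, mul_zero, mar fm, zero_mul, add_zero]
    have hsplit : ∀ z : G, Ctr z → e * (z * e) + f * (z * f) = z := by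
      intro z hz
      rw [hz e, hz f, ← mul_assoc, ← mul_assoc, he, hff, ← add_mul, hef1, one_mul]
    refine ⟨(LinearMap.mulLeft R e).comp ((LinearMap.mulRight R e).comp τ),
            (LinearMap.mulLeft R f).comp ((LinearMap.mulRight R f).comp τ),
            ?_, ?_, ?_, ?_, ?_, ?_, ?_, ?_⟩
    · intro a ha
      obtain ⟨ea, ae, fa, af⟩ := cAf he hf ha
      constructor
      · show e * (e * (τ a * e)) * e = e * (τ a * e)
        simp only [mul_assoc, hCr a e, mar (hCr a e), he, mar he]
      · intro x hx
        obtain ⟨ex, xe, fx, xf⟩ := cAf he hf hx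
        show e * (τ a * e) * x = x * (e * (τ a * e))
        simp only [mul_assoc, hCr a e, mar (hCr a e), hCr a x, mar (hCr a x),
          he, mar he, ex, mar ex, xe, mar xe]
    · intro b hb
      obtain ⟨eb, be, fb, bf⟩ := cBf he hf hb
      constructor
      · show cB e (f * (τ b * f))
        unfold cB
        rw [← hf]
        simp only [mul_assoc, hCr b f, mar (hCr b f), hff, mar hff]
      · intro x hx
        obtain ⟨ex, xe, fx, xf⟩ := cBf he hf hx
        show f * (τ b * f) * x = x * (f * (τ b * f))
        simp only [mul_assoc, hCr b f, mar (hCr b f), hCr b x, mar (hCr b x),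
          hff, mar hff, fx, mar fx, xf, mar xf]
    · intro a a' ha ha'
      obtain ⟨ea, ae, fa, af⟩ := cAf he hf ha
      obtain ⟨ea', a'e, fa', a'f⟩ := cAf he hf ha'
      show e * L (a * a') * e - e * (τ (a * a') * e) =
        (e * L a * e - e * (τ a * e)) * a' + a * (e * L a' * e - e * (τ a' * e))
      rw [hLx, hLx, hLx, hD a a']
      simp only [mul_add, add_mul, sub_mul, mul_sub, mul_assoc,
        he, mar he, ea, mar ea, ae, mar ae, ea', mar ea', a'e, mar a'e]
      abel
    · intro b b' hb hb'
      obtain ⟨eb, be, fb, bf⟩ := cBf he hf hb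
      obtain ⟨eb', b'e, fb', b'f⟩ := cBf he hf hb'
      show f * L (b * b') * f - f * (τ (b * b') * f) =
        (f * L b * f - f * (τ b * f)) * b' + b * (f * L b' * f - f * (τ b' * f))
      rw [hLx, hLx, hLx, hD b b']
      simp only [mul_add, add_mul, sub_mul, mul_sub, mul_assoc,
        hff, mar hff, fb, mar fb, bf, mar bf, fb', mar fb', b'f, mar b'f]
      abel
    · intro a ha
      obtain ⟨ea, ae, fa, af⟩ := cAf he hf ha
      have key : e * (τ a * e) + f * L a * f = τ a := by
        rw [hLx]
        refine comb2 (hfDaf a ha) (hsplit (τ a) (hC a)) ?_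
        simp only [mul_add, add_mul, mul_assoc]
        abel
      show Ctr (e * (τ a * e) + f * L a * f)
      rw [key]; exact hC a
    · intro b hb
      obtain ⟨eb, be, fb, bf⟩ := cBf he hf hb
      have key : e * L b * e + f * (τ b * f) = τ b := by
        rw [hLx]
        refine comb2 (heDbe b hb) (hsplit (τ b) (hC b)) ?_
        simp only [mul_add, add_mul, mul_assoc]
        abel
      show Ctr (e * L b * e + f * (τ b * f))
      rw [key]; exact hC b
    · intro m n hm hn
      have hττ : τ (m * n) = τ (n * m) := by
        have h1 := h0 m n
        rw [map_sub, sub_eq_zero] at h1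
        exact h1
      show e * (τ (m * n) * e) = e * L (n * m) * e
      rw [hLx, hττ]
      refine comb1 (heDnme m n hm hn).symm ?_
      simp only [mul_add, add_mul, mul_assoc]
      abel
    · intro m n hm hn
      have hττ : τ (m * n) = τ (n * m) := by
        have h1 := h0 m n
        rw [map_sub, sub_eq_zero] at h1
        exact h1
      show f * (τ (n * m) * f) = f * L (m * n) * f
      rw [hLx, ← hττ]
      refine comb1 (hfDmnf m n hm hn).symm ?_
      simp only [mul_add, add_mul, mul_assoc]
      abel
  · -- hard direction
    rintro ⟨ℓA, ℓB, hℓA, hℓB, hAA, hBB, hBa, hBb, hCa, hCb⟩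
    -- the candidate central map τ and derivation L - τ
    have hτdef : ∃ τ : G →ₗ[R] G, ∀ x : G,
        τ x = ℓA (e * (x * e)) + f * (L (e * (x * e)) * f) +
          (ℓB (f * (x * f)) + e * (L (f * (x * f)) * e)) := by
      refine ⟨(ℓA + (LinearMap.mulLeft R f).comp ((LinearMap.mulRight R f).comp L)).comp
          ((LinearMap.mulLeft R e).comp (LinearMap.mulRight R e)) +
        (ℓB + (LinearMap.mulLeft R e).comp ((LinearMap.mulRight R e).comp L)).comp
          ((LinearMap.mulLeft R f).comp (LinearMap.mulRight R f)), fun x => rfl⟩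
    obtain ⟨τ, hτx⟩ := hτdef
    -- corner membership of the four Peirce projections
    have cAe : ∀ x : G, cA e (e * (x * e)) := by
      intro x
      show e * (e * (x * e)) * e = e * (x * e)
      simp only [mul_assoc, he, mar he]
    have cBe : ∀ x : G, cB e (f * (x * f)) := by
      intro x
      show (1 - e) * (f * (x * f)) * (1 - e) = f * (x * f)
      rw [← hf]
      simp only [mul_assoc, hff, mar hff]
    have cMe : ∀ x : G, cM e (e * (x * f)) := by
      intro x
      show e * (e * (x * f)) * (1 - e) = e * (x * f)
      rw [← hf]
      simp only [mul_assoc, hff, mar he, he]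
    have cNe : ∀ x : G, cN e (f * (x * e)) := by
      intro x
      show (1 - e) * (f * (x * e)) * e = f * (x * e)
      rw [← hf]
      simp only [mul_assoc, he, mar hff]
    -- values of τ on the four corners
    have tauA : ∀ a : G, cA e a → τ a = ℓA a + f * (L a * f) := by
      intro a ha
      obtain ⟨ea, ae, fa, af⟩ := cAf he hf ha
      rw [hτx, show e * (a * e) = a by rw [ae, ea], show f * (a * f) = 0 by rw [af, mul_zero]]
      simp only [map_zero, zero_mul, mul_zero, add_zero]
    have tauB : ∀ b : G, cB e b → τ b = ℓB b + e * (L b * e) := by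
      intro b hb
      obtain ⟨eb, be, fb, bf⟩ := cBf he hf hb
      rw [hτx, show e * (b * e) = 0 by rw [be, mul_zero], show f * (b * f) = b by rw [bf, fb]]
      simp only [map_zero, zero_mul, mul_zero, add_zero, zero_add]
    have tauM : ∀ m : G, cM e m → τ m = 0 := by
      intro m hm
      obtain ⟨em, me, fm, mf⟩ := cMf he hf hm
      rw [hτx, show e * (m * e) = 0 by rw [me, mul_zero], show f * (m * f) = 0 by rw [mf, fm]]
      simp only [map_zero, zero_mul, mul_zero, add_zero, zero_add]
    have tauN : ∀ n : G, cN e n → τ n = 0 := by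
      intro n hn
      obtain ⟨en, ne', fn, nf⟩ := cNf he hf hn
      rw [hτx, show e * (n * e) = 0 by rw [ne', en], show f * (n * f) = 0 by rw [nf, mul_zero]]
      simp only [map_zero, zero_mul, mul_zero, add_zero, zero_add]
    -- τ takes central values
    have hτC : ∀ x : G, Ctr (τ x) := by
      intro x
      have h1 := hBa (e * (x * e)) (cAe x)
      have h2 := hBb (f * (x * f)) (cBe x)
      have key : τ x = (ℓA (e * (x * e)) + f * L (e * (x * e)) * f) +
          (e * L (f * (x * f)) * e + ℓB (f * (x * f))) := by
        rw [hτx]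
        simp only [mul_assoc]
        abel
      rw [key]
      intro z
      simp only [add_mul, mul_add, h1 z, h2 z]
    -- component identities for L
    have C1 : ∀ a : G, cA e a → e * (L a * f) = a * (L e * f) := by
      intro a ha
      obtain ⟨ea, ae, fa, af⟩ := cAf he hf ha
      refine comb1 (congrArg (fun t => e * (t * f)) (hL e a)).symm ?_
      simp only [mul_add, add_mul, mul_sub, sub_mul, mul_assoc, map_sub, map_zero,
        he, mar he, hef, mar hef, hfe, mar hfe, hff, mar hff,
        ea, mar ea, ae, mar ae, fa, mar fa, af, mar af,
        sub_self, mul_zero, zero_mul, sub_zero, zero_sub, add_zero, zero_add, neg_zero,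
        mul_neg, neg_mul, neg_neg, map_neg]
      abel
    have C2 : ∀ a : G, cA e a → f * (L a * e) = f * (L e * a) := by
      intro a ha
      obtain ⟨ea, ae, fa, af⟩ := cAf he hf ha
      refine comb1 (congrArg (fun t => f * (t * e)) (hL e a)) ?_
      simp only [mul_add, add_mul, mul_sub, sub_mul, mul_assoc, map_sub, map_zero,
        he, mar he, hef, mar hef, hfe, mar hfe, hff, mar hff,
        ea, mar ea, ae, mar ae, fa, mar fa, af, mar af,
        sub_self, mul_zero, zero_mul, sub_zero, zero_sub, add_zero, zero_add, neg_zero,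
        mul_neg, neg_mul, neg_neg, map_neg]
      abel
    have C3 : ∀ b : G, cB e b → e * (L b * f) = -(e * (L e * b)) := by
      intro b hb
      obtain ⟨eb, be, fb, bf⟩ := cBf he hf hb
      refine comb1 (congrArg (fun t => e * (t * f)) (hL e b)).symm ?_
      simp only [mul_add, add_mul, mul_sub, sub_mul, mul_assoc, map_sub, map_zero,
        he, mar he, hef, mar hef, hfe, mar hfe, hff, mar hff,
        eb, mar eb, be, mar be, fb, mar fb, bf, mar bf,
        sub_self, mul_zero, zero_mul, sub_zero, zero_sub, add_zero, zero_add, neg_zero,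
        mul_neg, neg_mul, neg_neg, map_neg]
      abel
    have C4 : ∀ b : G, cB e b → f * (L b * e) = -(b * (L e * e)) := by
      intro b hb
      obtain ⟨eb, be, fb, bf⟩ := cBf he hf hb
      refine comb1 (congrArg (fun t => f * (t * e)) (hL e b)) ?_
      simp only [mul_add, add_mul, mul_sub, sub_mul, mul_assoc, map_sub, map_zero,
        he, mar he, hef, mar hef, hfe, mar hfe, hff, mar hff,
        eb, mar eb, be, mar be, fb, mar fb, bf, mar bf,
        sub_self, mul_zero, zero_mul, sub_zero, zero_sub, add_zero, zero_add, neg_zero,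
        mul_neg, neg_mul, neg_neg, map_neg]
      abel
    have C5 : ∀ m : G, cM e m → e * (L m * e) = -(m * (L e * e)) := by
      intro m hm
      obtain ⟨em, me, fm, mf⟩ := cMf he hf hm
      refine comb1 (congrArg (fun t => e * (t * e)) (hL e m)) ?_
      simp only [mul_add, add_mul, mul_sub, sub_mul, mul_assoc, map_sub, map_zero,
        he, mar he, hef, mar hef, hfe, mar hfe, hff, mar hff,
        em, mar em, me, mar me, fm, mar fm, mf, mar mf,
        sub_self, mul_zero, zero_mul, sub_zero, zero_sub, add_zero, zero_add, neg_zero,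
        mul_neg, neg_mul, neg_neg, map_neg]
      abel
    have C6 : ∀ m : G, cM e m → f * (L m * e) = 0 := by
      intro m hm
      obtain ⟨em, me, fm, mf⟩ := cMf he hf hm
      have h2 : f * (L m * e) + f * (L m * e) = 0 := by
        refine comb1 (congrArg (fun t => f * (t * e)) (hL e m)) ?_
        simp only [mul_add, add_mul, mul_sub, sub_mul, mul_assoc, map_sub, map_zero,
          he, mar he, hef, mar hef, hfe, mar hfe, hff, mar hff,
          em, mar em, me, mar me, fm, mar fm, mf, mar mf,
          sub_self, mul_zero, zero_mul, sub_zero, zero_sub, add_zero, zero_add, neg_zero,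
          mul_neg, neg_mul, neg_neg, map_neg]
        abel
      refine hN2 _ ?_ h2
      show (1 - e) * (f * (L m * e)) * e = f * (L m * e)
      rw [← hf]
      simp only [mul_assoc, he, mar hff]
    have C7 : ∀ m : G, cM e m → f * (L m * f) = f * (L e * m) := by
      intro m hm
      obtain ⟨em, me, fm, mf⟩ := cMf he hf hm
      refine comb1 (congrArg (fun t => f * (t * f)) (hL e m)) ?_
      simp only [mul_add, add_mul, mul_sub, sub_mul, mul_assoc, map_sub, map_zero,
        he, mar he, hef, mar hef, hfe, mar hfe, hff, mar hff,
        em, mar em, me, mar me, fm, mar fm, mf, mar mf,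
        sub_self, mul_zero, zero_mul, sub_zero, zero_sub, add_zero, zero_add, neg_zero,
        mul_neg, neg_mul, neg_neg, map_neg]
      abel
    have C8 : ∀ n : G, cN e n → f * (L n * f) = n * (L e * f) := by
      intro n hn
      obtain ⟨en, ne', fn, nf⟩ := cNf he hf hn
      refine comb1 (congrArg (fun t => f * (t * f)) (hL e n)).symm ?_
      simp only [mul_add, add_mul, mul_sub, sub_mul, mul_assoc, map_sub, map_zero, map_neg,
        he, mar he, hef, mar hef, hfe, mar hfe, hff, mar hff,
        en, mar en, ne', mar ne', fn, mar fn, nf, mar nf,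
        sub_self, mul_zero, zero_mul, sub_zero, zero_sub, add_zero, zero_add, neg_zero,
        mul_neg, neg_mul, neg_neg]
      abel
    have C9 : ∀ n : G, cN e n → e * (L n * f) = 0 := by
      intro n hn
      obtain ⟨en, ne', fn, nf⟩ := cNf he hf hn
      have h2 : e * (L n * f) + e * (L n * f) = 0 := by
        refine comb1 (congrArg (fun t => e * (t * f)) (hL e n)).symm ?_
        simp only [mul_add, add_mul, mul_sub, sub_mul, mul_assoc, map_sub, map_zero, map_neg,
          he, mar he, hef, mar hef, hfe, mar hfe, hff, mar hff,
          en, mar en, ne', mar ne', fn, mar fn, nf, mar nf,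
          sub_self, mul_zero, zero_mul, sub_zero, zero_sub, add_zero, zero_add, neg_zero,
          mul_neg, neg_mul, neg_neg]
        abel
      refine hM2 _ ?_ h2
      show e * (e * (L n * f)) * (1 - e) = e * (L n * f)
      rw [← hf]
      simp only [mul_assoc, hff, mar he, he]
    have C10 : ∀ n : G, cN e n → e * (L n * e) = -(e * (L e * n)) := by
      intro n hn
      obtain ⟨en, ne', fn, nf⟩ := cNf he hf hn
      refine comb1 (congrArg (fun t => e * (t * e)) (hL e n)).symm ?_
      simp only [mul_add, add_mul, mul_sub, sub_mul, mul_assoc, map_sub, map_zero, map_neg,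
        he, mar he, hef, mar hef, hfe, mar hfe, hff, mar hff,
        en, mar en, ne', mar ne', fn, mar fn, nf, mar nf,
        sub_self, mul_zero, zero_mul, sub_zero, zero_sub, add_zero, zero_add, neg_zero,
        mul_neg, neg_mul, neg_neg]
      abel
    -- full Peirce decomposition of L on corner elements
    have Ldec : ∀ x : G, L x = e * (L x * e) + e * (L x * f) + (f * (L x * e) + f * (L x * f)) := by
      intro x
      rw [hf]
      noncomm_ring
    have LA : ∀ a : G, cA e a →
        L a = e * (L a * e) + a * (L e * f) + (f * (L e * a) + f * (L a * f)) := by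
      intro a ha
      exact comb3 (Ldec a) (C1 a ha) (C2 a ha) (by abel)
    have LB : ∀ b : G, cB e b →
        L b = e * (L b * e) + -(e * (L e * b)) + (-(b * (L e * e)) + f * (L b * f)) := by
      intro b hb
      exact comb3 (Ldec b) (C3 b hb) (C4 b hb) (by abel)
    have LM : ∀ m : G, cM e m →
        L m = -(m * (L e * e)) + e * (L m * f) + (0 + f * (L e * m)) := by
      intro m hm
      exact comb4 (Ldec m) (C5 m hm) (C6 m hm) (C7 m hm) (by abel)
    have LN : ∀ n : G, cN e n →
        L n = -(e * (L e * n)) + 0 + (f * (L n * e) + n * (L e * f)) := by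
      intro n hn
      exact comb4 (Ldec n) (C10 n hn) (C9 n hn) (C8 n hn) (by abel)
    -- mixed Lie identities
    have X1 : ∀ a m : G, cA e a → cM e m →
        e * (L (a * m) * f) = e * (L a * m) - m * (L a * f) + a * (L m * f) := by
      intro a m ha hm
      obtain ⟨ea, ae, fa, af⟩ := cAf he hf ha
      obtain ⟨em, me, fm, mf⟩ := cMf he hf hm
      have hma : m * a = 0 := mul0B me ea
      refine comb1 (congrArg (fun t => e * (t * f)) (hL a m)) ?_
      simp only [LinearMap.sub_apply, mul_add, add_mul, mul_sub, sub_mul, mul_assoc, mul_one, one_mul, mul_zero, zero_mul, add_zero, zero_add, sub_zero, zero_sub, sub_self, neg_zero, mul_neg, neg_mul, neg_neg, map_sub, map_add, map_zero, map_neg, he, mar he, hef, mar hef, hfe, mar hfe, hff, mar hff, ea, mar ea, ae, mar ae, fa, mar fa, af, mar af, em, mar em, me, mar me, fm, mar fm, mf, mar mf, hma, mar hma]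
      abel
    have X2 : ∀ n a : G, cN e n → cA e a →
        f * (L (n * a) * e) = f * (L n * a) + n * (L a * e) - f * (L a * n) := by
      intro n a hn ha
      obtain ⟨ea, ae, fa, af⟩ := cAf he hf ha
      obtain ⟨en, ne', fn, nf⟩ := cNf he hf hn
      have han : a * n = 0 := mul0A ae en
      refine comb1 (congrArg (fun t => f * (t * e)) (hL n a)) ?_
      simp only [LinearMap.sub_apply, mul_add, add_mul, mul_sub, sub_mul, mul_assoc, mul_one, one_mul, mul_zero, zero_mul, add_zero, zero_add, sub_zero, zero_sub, sub_self, neg_zero, mul_neg, neg_mul, neg_neg, map_sub, map_add, map_zero, map_neg, he, mar he, hef, mar hef, hfe, mar hfe, hff, mar hff, ea, mar ea, ae, mar ae, fa, mar fa, af, mar af, en, mar en, ne', mar ne', fn, mar fn, nf, mar nf, han, mar han]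
      abel
    have X3 : ∀ m b : G, cM e m → cB e b →
        e * (L (m * b) * f) = e * (L m * b) + m * (L b * f) - e * (L b * m) := by
      intro m b hm hb
      obtain ⟨em, me, fm, mf⟩ := cMf he hf hm
      obtain ⟨eb, be, fb, bf⟩ := cBf he hf hb
      have hbm : b * m = 0 := mul0B be em
      refine comb1 (congrArg (fun t => e * (t * f)) (hL m b)) ?_
      simp only [LinearMap.sub_apply, mul_add, add_mul, mul_sub, sub_mul, mul_assoc, mul_one, one_mul, mul_zero, zero_mul, add_zero, zero_add, sub_zero, zero_sub, sub_self, neg_zero, mul_neg, neg_mul, neg_neg, map_sub, map_add, map_zero, map_neg, he, mar he, hef, mar hef, hfe, mar hfe, hff, mar hff, em, mar em, me, mar me, fm, mar fm, mf, mar mf, eb, mar eb, be, mar be, fb, mar fb, bf, mar bf, hbm, mar hbm]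
      abel
    have X4 : ∀ b n : G, cB e b → cN e n →
        f * (L (b * n) * e) = f * (L b * n) - n * (L b * e) + b * (L n * e) := by
      intro b n hb hn
      obtain ⟨eb, be, fb, bf⟩ := cBf he hf hb
      obtain ⟨en, ne', fn, nf⟩ := cNf he hf hn
      have hnb : n * b = 0 := mul0A ne' eb
      refine comb1 (congrArg (fun t => f * (t * e)) (hL b n)) ?_
      simp only [LinearMap.sub_apply, mul_add, add_mul, mul_sub, sub_mul, mul_assoc, mul_one, one_mul, mul_zero, zero_mul, add_zero, zero_add, sub_zero, zero_sub, sub_self, neg_zero, mul_neg, neg_mul, neg_neg, map_sub, map_add, map_zero, map_neg, he, mar he, hef, mar hef, hfe, mar hfe, hff, mar hff, eb, mar eb, be, mar be, fb, mar fb, bf, mar bf, en, mar en, ne', mar ne', fn, mar fn, nf, mar nf, hnb, mar hnb]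
      abel
    have X5 : ∀ m n : G, cM e m → cN e n →
        e * (L (m * n) * e) = e * (L (n * m) * e) + e * (L m * n) + m * (L n * e) := by
      intro m n hm hn
      obtain ⟨em, me, fm, mf⟩ := cMf he hf hm
      obtain ⟨en, ne', fn, nf⟩ := cNf he hf hn
      refine comb1 (congrArg (fun t => e * (t * e)) (hL m n)) ?_
      simp only [LinearMap.sub_apply, mul_add, add_mul, mul_sub, sub_mul, mul_assoc, mul_one, one_mul, mul_zero, zero_mul, add_zero, zero_add, sub_zero, zero_sub, sub_self, neg_zero, mul_neg, neg_mul, neg_neg, map_sub, map_add, map_zero, map_neg, he, mar he, hef, mar hef, hfe, mar hfe, hff, mar hff, em, mar em, me, mar me, fm, mar fm, mf, mar mf, en, mar en, ne', mar ne', fn, mar fn, nf, mar nf]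
      abel
    have X6 : ∀ m n : G, cM e m → cN e n →
        f * (L (n * m) * f) = f * (L (m * n) * f) + f * (L n * m) + n * (L m * f) := by
      intro m n hm hn
      obtain ⟨em, me, fm, mf⟩ := cMf he hf hm
      obtain ⟨en, ne', fn, nf⟩ := cNf he hf hn
      refine comb1 (congrArg (fun t => f * (t * f)) (hL n m)) ?_
      simp only [LinearMap.sub_apply, mul_add, add_mul, mul_sub, sub_mul, mul_assoc, mul_one, one_mul, mul_zero, zero_mul, add_zero, zero_add, sub_zero, zero_sub, sub_self, neg_zero, mul_neg, neg_mul, neg_neg, map_sub, map_add, map_zero, map_neg, he, mar he, hef, mar hef, hfe, mar hfe, hff, mar hff, em, mar em, me, mar me, fm, mar fm, mf, mar mf, en, mar en, ne', mar ne', fn, mar fn, nf, mar nf]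
      abel
    -- centrality consequences
    have Z1 : ∀ a m : G, cA e a → cM e m → ℓA a * m = m * (L a * f) := by
      intro a m ha hm
      obtain ⟨ea, ae, fa, af⟩ := cAf he hf ha
      obtain ⟨em, me, fm, mf⟩ := cMf he hf hm
      obtain ⟨eℓa, ℓae, fℓa, ℓaf⟩ := cAf he hf (hℓA a ha).1
      refine comb1 ((hBa a ha) m) ?_
      simp only [LinearMap.sub_apply, mul_add, add_mul, mul_sub, sub_mul, mul_assoc, mul_one, one_mul, mul_zero, zero_mul, add_zero, zero_add, sub_zero, zero_sub, sub_self, neg_zero, mul_neg, neg_mul, neg_neg, map_sub, map_add, map_zero, map_neg, he, mar he, hef, mar hef, hfe, mar hfe, hff, mar hff, ea, mar ea, ae, mar ae, fa, mar fa, af, mar af, em, mar em, me, mar me, fm, mar fm, mf, mar mf,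
        mul0B me eℓa, mar (mul0B me eℓa)]
      abel
    have Z2 : ∀ a n : G, cA e a → cN e n → f * (L a * n) = n * ℓA a := by
      intro a n ha hn
      obtain ⟨ea, ae, fa, af⟩ := cAf he hf ha
      obtain ⟨en, ne', fn, nf⟩ := cNf he hf hn
      obtain ⟨eℓa, ℓae, fℓa, ℓaf⟩ := cAf he hf (hℓA a ha).1
      refine comb1 ((hBa a ha) n) ?_
      simp only [LinearMap.sub_apply, mul_add, add_mul, mul_sub, sub_mul, mul_assoc, mul_one, one_mul, mul_zero, zero_mul, add_zero, zero_add, sub_zero, zero_sub, sub_self, neg_zero, mul_neg, neg_mul, neg_neg, map_sub, map_add, map_zero, map_neg, he, mar he, hef, mar hef, hfe, mar hfe, hff, mar hff, ea, mar ea, ae, mar ae, fa, mar fa, af, mar af, en, mar en, ne', mar ne', fn, mar fn, nf, mar nf,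
        mul0A ℓae en, mar (mul0A ℓae en)]
      abel
    have Z3 : ∀ b m : G, cB e b → cM e m → e * (L b * m) = m * ℓB b := by
      intro b m hb hm
      obtain ⟨eb, be, fb, bf⟩ := cBf he hf hb
      obtain ⟨em, me, fm, mf⟩ := cMf he hf hm
      obtain ⟨eℓb, ℓbe, fℓb, ℓbf⟩ := cBf he hf (hℓB b hb).1
      refine comb1 ((hBb b hb) m) ?_
      simp only [LinearMap.sub_apply, mul_add, add_mul, mul_sub, sub_mul, mul_assoc, mul_one, one_mul, mul_zero, zero_mul, add_zero, zero_add, sub_zero, zero_sub, sub_self, neg_zero, mul_neg, neg_mul, neg_neg, map_sub, map_add, map_zero, map_neg, he, mar he, hef, mar hef, hfe, mar hfe, hff, mar hff, eb, mar eb, be, mar be, fb, mar fb, bf, mar bf, em, mar em, me, mar me, fm, mar fm, mf, mar mf,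
        mul0B ℓbe em, mar (mul0B ℓbe em)]
      abel
    have Z4 : ∀ b n : G, cB e b → cN e n → ℓB b * n = n * (L b * e) := by
      intro b n hb hn
      obtain ⟨eb, be, fb, bf⟩ := cBf he hf hb
      obtain ⟨en, ne', fn, nf⟩ := cNf he hf hn
      obtain ⟨eℓb, ℓbe, fℓb, ℓbf⟩ := cBf he hf (hℓB b hb).1
      refine comb1 ((hBb b hb) n) ?_
      simp only [LinearMap.sub_apply, mul_add, add_mul, mul_sub, sub_mul, mul_assoc, mul_one, one_mul, mul_zero, zero_mul, add_zero, zero_add, sub_zero, zero_sub, sub_self, neg_zero, mul_neg, neg_mul, neg_neg, map_sub, map_add, map_zero, map_neg, he, mar he, hef, mar hef, hfe, mar hfe, hff, mar hff, eb, mar eb, be, mar be, fb, mar fb, bf, mar bf, en, mar en, ne', mar ne', fn, mar fn, nf, mar nf,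
        mul0A ne' eℓb, mar (mul0A ne' eℓb)]
      abel
    have caseAA : ∀ a b : G, cA e a → cA e b →
        (L - τ) (a * b) = (L - τ) a * b + a * ((L - τ) b) := by
      intro a b ha hb
      obtain ⟨ea, ae, fa, af⟩ := cAf he hf ha
      obtain ⟨eb, be, fb, bf⟩ := cAf he hf hb
      obtain ⟨eℓa, ℓae, fℓa, ℓaf⟩ := cAf he hf (hℓA a ha).1
      obtain ⟨eℓb, ℓbe, fℓb, ℓbf⟩ := cAf he hf (hℓA b hb).1
      have hpq : cA e (a * b) := by
        show e * (a * b) * e = a * b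
        exact cornerMul ea be
      simp only [LinearMap.sub_apply, tauA a ha, tauA b hb, tauA (a * b) hpq]
      rw [LA (a * b) hpq, LA a ha, LA b hb]
      refine comb1 (hAA a b ha hb) ?_
      simp only [LinearMap.sub_apply, mul_add, add_mul, mul_sub, sub_mul, mul_assoc, mul_one, one_mul, mul_zero, zero_mul, add_zero, zero_add, sub_zero, zero_sub, sub_self, neg_zero, mul_neg, neg_mul, neg_neg, map_sub, map_add, map_zero, map_neg, he, mar he, hef, mar hef, hfe, mar hfe, hff, mar hff, ea, mar ea, ae, mar ae, fa, mar fa, af, mar af, eb, mar eb, be, mar be, fb, mar fb, bf, mar bf]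
      abel
    have caseAM : ∀ a m : G, cA e a → cM e m →
        (L - τ) (a * m) = (L - τ) a * m + a * ((L - τ) m) := by
      intro a m ha hm
      obtain ⟨ea, ae, fa, af⟩ := cAf he hf ha
      obtain ⟨em, me, fm, mf⟩ := cMf he hf hm
      obtain ⟨eℓa, ℓae, fℓa, ℓaf⟩ := cAf he hf (hℓA a ha).1
      have hpq : cM e (a * m) := by
        show e * (a * m) * (1 - e) = a * m
        rw [← hf]
        exact cornerMul ea mf
      simp only [LinearMap.sub_apply, tauA a ha, tauM m hm, tauM (a * m) hpq]
      rw [LM (a * m) hpq, LA a ha, LM m hm]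
      refine comb2 (X1 a m ha hm) (Z1 a m ha hm) ?_
      simp only [LinearMap.sub_apply, mul_add, add_mul, mul_sub, sub_mul, mul_assoc, mul_one, one_mul, mul_zero, zero_mul, add_zero, zero_add, sub_zero, zero_sub, sub_self, neg_zero, mul_neg, neg_mul, neg_neg, map_sub, map_add, map_zero, map_neg, he, mar he, hef, mar hef, hfe, mar hfe, hff, mar hff, ea, mar ea, ae, mar ae, fa, mar fa, af, mar af, em, mar em, me, mar me, fm, mar fm, mf, mar mf]
      abel
    have caseAN : ∀ a n : G, cA e a → cN e n →
        (L - τ) (a * n) = (L - τ) a * n + a * ((L - τ) n) := by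
      intro a n ha hn
      obtain ⟨ea, ae, fa, af⟩ := cAf he hf ha
      obtain ⟨en, ne, fn, nf⟩ := cNf he hf hn
      obtain ⟨eℓa, ℓae, fℓa, ℓaf⟩ := cAf he hf (hℓA a ha).1
      have hz : a * n = 0 := mul0A ae en
      rw [hz]
      simp only [LinearMap.sub_apply, tauA a ha, tauN n hn, map_zero]
      rw [LA a ha, LN n hn]
      simp only [LinearMap.sub_apply, mul_add, add_mul, mul_sub, sub_mul, mul_assoc, mul_one, one_mul, mul_zero, zero_mul, add_zero, zero_add, sub_zero, zero_sub, sub_self, neg_zero, mul_neg, neg_mul, neg_neg, map_sub, map_add, map_zero, map_neg, he, mar he, hef, mar hef, hfe, mar hfe, hff, mar hff, ea, mar ea, ae, mar ae, fa, mar fa, af, mar af, en, mar en, ne, mar ne, fn, mar fn, nf, mar nf, hz, mar (hz), mul0A ℓae en, mar (mul0A ℓae en)]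
      abel
    have caseAB : ∀ a b : G, cA e a → cB e b →
        (L - τ) (a * b) = (L - τ) a * b + a * ((L - τ) b) := by
      intro a b ha hb
      obtain ⟨ea, ae, fa, af⟩ := cAf he hf ha
      obtain ⟨eb, be, fb, bf⟩ := cBf he hf hb
      obtain ⟨eℓa, ℓae, fℓa, ℓaf⟩ := cAf he hf (hℓA a ha).1
      obtain ⟨eℓb, ℓbe, fℓb, ℓbf⟩ := cBf he hf (hℓB b hb).1
      have hz : a * b = 0 := mul0A ae eb
      rw [hz]
      simp only [LinearMap.sub_apply, tauA a ha, tauB b hb, map_zero]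
      rw [LA a ha, LB b hb]
      simp only [LinearMap.sub_apply, mul_add, add_mul, mul_sub, sub_mul, mul_assoc, mul_one, one_mul, mul_zero, zero_mul, add_zero, zero_add, sub_zero, zero_sub, sub_self, neg_zero, mul_neg, neg_mul, neg_neg, map_sub, map_add, map_zero, map_neg, he, mar he, hef, mar hef, hfe, mar hfe, hff, mar hff, ea, mar ea, ae, mar ae, fa, mar fa, af, mar af, eb, mar eb, be, mar be, fb, mar fb, bf, mar bf, hz, mar (hz), mul0A ℓae eb, mar (mul0A ℓae eb), mul0A ae eℓb, mar (mul0A ae eℓb)]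
      abel
    have caseMA : ∀ m a : G, cM e m → cA e a →
        (L - τ) (m * a) = (L - τ) m * a + m * ((L - τ) a) := by
      intro m a hm ha
      obtain ⟨em, me, fm, mf⟩ := cMf he hf hm
      obtain ⟨ea, ae, fa, af⟩ := cAf he hf ha
      obtain ⟨eℓa, ℓae, fℓa, ℓaf⟩ := cAf he hf (hℓA a ha).1
      have hz : m * a = 0 := mul0B me ea
      rw [hz]
      simp only [LinearMap.sub_apply, tauM m hm, tauA a ha, map_zero]
      rw [LM m hm, LA a ha]
      simp only [LinearMap.sub_apply, mul_add, add_mul, mul_sub, sub_mul, mul_assoc, mul_one, one_mul, mul_zero, zero_mul, add_zero, zero_add, sub_zero, zero_sub, sub_self, neg_zero, mul_neg, neg_mul, neg_neg, map_sub, map_add, map_zero, map_neg, he, mar he, hef, mar hef, hfe, mar hfe, hff, mar hff, em, mar em, me, mar me, fm, mar fm, mf, mar mf, ea, mar ea, ae, mar ae, fa, mar fa, af, mar af, hz, mar (hz), mul0B me eℓa, mar (mul0B me eℓa)]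
      abel
    have caseMM : ∀ m n : G, cM e m → cM e n →
        (L - τ) (m * n) = (L - τ) m * n + m * ((L - τ) n) := by
      intro m n hm hn
      obtain ⟨em, me, fm, mf⟩ := cMf he hf hm
      obtain ⟨en, ne, fn, nf⟩ := cMf he hf hn
      have hz : m * n = 0 := mul0B me en
      rw [hz]
      simp only [LinearMap.sub_apply, tauM m hm, tauM n hn, map_zero]
      rw [LM m hm, LM n hn]
      simp only [LinearMap.sub_apply, mul_add, add_mul, mul_sub, sub_mul, mul_assoc, mul_one, one_mul, mul_zero, zero_mul, add_zero, zero_add, sub_zero, zero_sub, sub_self, neg_zero, mul_neg, neg_mul, neg_neg, map_sub, map_add, map_zero, map_neg, he, mar he, hef, mar hef, hfe, mar hfe, hff, mar hff, em, mar em, me, mar me, fm, mar fm, mf, mar mf, en, mar en, ne, mar ne, fn, mar fn, nf, mar nf, hz, mar (hz)]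
      abel
    have caseMN : ∀ m n : G, cM e m → cN e n →
        (L - τ) (m * n) = (L - τ) m * n + m * ((L - τ) n) := by
      intro m n hm hn
      obtain ⟨em, me, fm, mf⟩ := cMf he hf hm
      obtain ⟨en, ne, fn, nf⟩ := cNf he hf hn
      have hpq : cA e (m * n) := by
        show e * (m * n) * e = m * n
        exact cornerMul em ne
      simp only [LinearMap.sub_apply, tauM m hm, tauN n hn, tauA (m * n) hpq]
      rw [LA (m * n) hpq, LM m hm, LN n hn]
      refine comb2 (X5 m n hm hn) (hCa m n hm hn).symm ?_
      simp only [LinearMap.sub_apply, mul_add, add_mul, mul_sub, sub_mul, mul_assoc, mul_one, one_mul, mul_zero, zero_mul, add_zero, zero_add, sub_zero, zero_sub, sub_self, neg_zero, mul_neg, neg_mul, neg_neg, map_sub, map_add, map_zero, map_neg, he, mar he, hef, mar hef, hfe, mar hfe, hff, mar hff, em, mar em, me, mar me, fm, mar fm, mf, mar mf, en, mar en, ne, mar ne, fn, mar fn, nf, mar nf]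
      abel
    have caseMB : ∀ m b : G, cM e m → cB e b →
        (L - τ) (m * b) = (L - τ) m * b + m * ((L - τ) b) := by
      intro m b hm hb
      obtain ⟨em, me, fm, mf⟩ := cMf he hf hm
      obtain ⟨eb, be, fb, bf⟩ := cBf he hf hb
      obtain ⟨eℓb, ℓbe, fℓb, ℓbf⟩ := cBf he hf (hℓB b hb).1
      have hpq : cM e (m * b) := by
        show e * (m * b) * (1 - e) = m * b
        rw [← hf]
        exact cornerMul em bf
      simp only [LinearMap.sub_apply, tauM m hm, tauB b hb, tauM (m * b) hpq]
      rw [LM (m * b) hpq, LM m hm, LB b hb]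
      refine comb2 (X3 m b hm hb) (Z3 b m hb hm).symm ?_
      simp only [LinearMap.sub_apply, mul_add, add_mul, mul_sub, sub_mul, mul_assoc, mul_one, one_mul, mul_zero, zero_mul, add_zero, zero_add, sub_zero, zero_sub, sub_self, neg_zero, mul_neg, neg_mul, neg_neg, map_sub, map_add, map_zero, map_neg, he, mar he, hef, mar hef, hfe, mar hfe, hff, mar hff, em, mar em, me, mar me, fm, mar fm, mf, mar mf, eb, mar eb, be, mar be, fb, mar fb, bf, mar bf]
      abel
    have caseNA : ∀ n a : G, cN e n → cA e a →
        (L - τ) (n * a) = (L - τ) n * a + n * ((L - τ) a) := by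
      intro n a hn ha
      obtain ⟨en, ne, fn, nf⟩ := cNf he hf hn
      obtain ⟨ea, ae, fa, af⟩ := cAf he hf ha
      obtain ⟨eℓa, ℓae, fℓa, ℓaf⟩ := cAf he hf (hℓA a ha).1
      have hpq : cN e (n * a) := by
        show (1 - e) * (n * a) * e = n * a
        rw [← hf]
        exact cornerMul fn ae
      simp only [LinearMap.sub_apply, tauN n hn, tauA a ha, tauN (n * a) hpq]
      rw [LN (n * a) hpq, LN n hn, LA a ha]
      refine comb2 (X2 n a hn ha) (Z2 a n ha hn).symm ?_
      simp only [LinearMap.sub_apply, mul_add, add_mul, mul_sub, sub_mul, mul_assoc, mul_one, one_mul, mul_zero, zero_mul, add_zero, zero_add, sub_zero, zero_sub, sub_self, neg_zero, mul_neg, neg_mul, neg_neg, map_sub, map_add, map_zero, map_neg, he, mar he, hef, mar hef, hfe, mar hfe, hff, mar hff, en, mar en, ne, mar ne, fn, mar fn, nf, mar nf, ea, mar ea, ae, mar ae, fa, mar fa, af, mar af]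
      abel
    have caseNM : ∀ n m : G, cN e n → cM e m →
        (L - τ) (n * m) = (L - τ) n * m + n * ((L - τ) m) := by
      intro n m hn hm
      obtain ⟨en, ne, fn, nf⟩ := cNf he hf hn
      obtain ⟨em, me, fm, mf⟩ := cMf he hf hm
      have hpq : cB e (n * m) := by
        show (1 - e) * (n * m) * (1 - e) = n * m
        rw [← hf]
        exact cornerMul fn mf
      simp only [LinearMap.sub_apply, tauN n hn, tauM m hm, tauB (n * m) hpq]
      rw [LB (n * m) hpq, LN n hn, LM m hm]
      refine comb2 (X6 m n hm hn) (hCb m n hm hn).symm ?_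
      simp only [LinearMap.sub_apply, mul_add, add_mul, mul_sub, sub_mul, mul_assoc, mul_one, one_mul, mul_zero, zero_mul, add_zero, zero_add, sub_zero, zero_sub, sub_self, neg_zero, mul_neg, neg_mul, neg_neg, map_sub, map_add, map_zero, map_neg, he, mar he, hef, mar hef, hfe, mar hfe, hff, mar hff, en, mar en, ne, mar ne, fn, mar fn, nf, mar nf, em, mar em, me, mar me, fm, mar fm, mf, mar mf]
      abel
    have caseNN : ∀ n p : G, cN e n → cN e p →
        (L - τ) (n * p) = (L - τ) n * p + n * ((L - τ) p) := by
      intro n p hn hp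
      obtain ⟨en, ne, fn, nf⟩ := cNf he hf hn
      obtain ⟨ep, pe, fp, pf⟩ := cNf he hf hp
      have hz : n * p = 0 := mul0A ne ep
      rw [hz]
      simp only [LinearMap.sub_apply, tauN n hn, tauN p hp, map_zero]
      rw [LN n hn, LN p hp]
      simp only [LinearMap.sub_apply, mul_add, add_mul, mul_sub, sub_mul, mul_assoc, mul_one, one_mul, mul_zero, zero_mul, add_zero, zero_add, sub_zero, zero_sub, sub_self, neg_zero, mul_neg, neg_mul, neg_neg, map_sub, map_add, map_zero, map_neg, he, mar he, hef, mar hef, hfe, mar hfe, hff, mar hff, en, mar en, ne, mar ne, fn, mar fn, nf, mar nf, ep, mar ep, pe, mar pe, fp, mar fp, pf, mar pf, hz, mar (hz)]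
      abel
    have caseNB : ∀ n b : G, cN e n → cB e b →
        (L - τ) (n * b) = (L - τ) n * b + n * ((L - τ) b) := by
      intro n b hn hb
      obtain ⟨en, ne, fn, nf⟩ := cNf he hf hn
      obtain ⟨eb, be, fb, bf⟩ := cBf he hf hb
      obtain ⟨eℓb, ℓbe, fℓb, ℓbf⟩ := cBf he hf (hℓB b hb).1
      have hz : n * b = 0 := mul0A ne eb
      rw [hz]
      simp only [LinearMap.sub_apply, tauN n hn, tauB b hb, map_zero]
      rw [LN n hn, LB b hb]
      simp only [LinearMap.sub_apply, mul_add, add_mul, mul_sub, sub_mul, mul_assoc, mul_one, one_mul, mul_zero, zero_mul, add_zero, zero_add, sub_zero, zero_sub, sub_self, neg_zero, mul_neg, neg_mul, neg_neg, map_sub, map_add, map_zero, map_neg, he, mar he, hef, mar hef, hfe, mar hfe, hff, mar hff, en, mar en, ne, mar ne, fn, mar fn, nf, mar nf, eb, mar eb, be, mar be, fb, mar fb, bf, mar bf, hz, mar (hz), mul0A ne eℓb, mar (mul0A ne eℓb)]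
      abel
    have caseBA : ∀ b a : G, cB e b → cA e a →
        (L - τ) (b * a) = (L - τ) b * a + b * ((L - τ) a) := by
      intro b a hb ha
      obtain ⟨eb, be, fb, bf⟩ := cBf he hf hb
      obtain ⟨ea, ae, fa, af⟩ := cAf he hf ha
      obtain ⟨eℓa, ℓae, fℓa, ℓaf⟩ := cAf he hf (hℓA a ha).1
      obtain ⟨eℓb, ℓbe, fℓb, ℓbf⟩ := cBf he hf (hℓB b hb).1
      have hz : b * a = 0 := mul0B be ea
      rw [hz]
      simp only [LinearMap.sub_apply, tauB b hb, tauA a ha, map_zero]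
      rw [LB b hb, LA a ha]
      simp only [LinearMap.sub_apply, mul_add, add_mul, mul_sub, sub_mul, mul_assoc, mul_one, one_mul, mul_zero, zero_mul, add_zero, zero_add, sub_zero, zero_sub, sub_self, neg_zero, mul_neg, neg_mul, neg_neg, map_sub, map_add, map_zero, map_neg, he, mar he, hef, mar hef, hfe, mar hfe, hff, mar hff, eb, mar eb, be, mar be, fb, mar fb, bf, mar bf, ea, mar ea, ae, mar ae, fa, mar fa, af, mar af, hz, mar (hz), mul0B ℓbe ea, mar (mul0B ℓbe ea), mul0B be eℓa, mar (mul0B be eℓa)]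
      abel
    have caseBM : ∀ b m : G, cB e b → cM e m →
        (L - τ) (b * m) = (L - τ) b * m + b * ((L - τ) m) := by
      intro b m hb hm
      obtain ⟨eb, be, fb, bf⟩ := cBf he hf hb
      obtain ⟨em, me, fm, mf⟩ := cMf he hf hm
      obtain ⟨eℓb, ℓbe, fℓb, ℓbf⟩ := cBf he hf (hℓB b hb).1
      have hz : b * m = 0 := mul0B be em
      rw [hz]
      simp only [LinearMap.sub_apply, tauB b hb, tauM m hm, map_zero]
      rw [LB b hb, LM m hm]
      simp only [LinearMap.sub_apply, mul_add, add_mul, mul_sub, sub_mul, mul_assoc, mul_one, one_mul, mul_zero, zero_mul, add_zero, zero_add, sub_zero, zero_sub, sub_self, neg_zero, mul_neg, neg_mul, neg_neg, map_sub, map_add, map_zero, map_neg, he, mar he, hef, mar hef, hfe, mar hfe, hff, mar hff, eb, mar eb, be, mar be, fb, mar fb, bf, mar bf, em, mar em, me, mar me, fm, mar fm, mf, mar mf, hz, mar (hz), mul0B ℓbe em, mar (mul0B ℓbe em)]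
      abel
    have caseBN : ∀ b n : G, cB e b → cN e n →
        (L - τ) (b * n) = (L - τ) b * n + b * ((L - τ) n) := by
      intro b n hb hn
      obtain ⟨eb, be, fb, bf⟩ := cBf he hf hb
      obtain ⟨en, ne, fn, nf⟩ := cNf he hf hn
      obtain ⟨eℓb, ℓbe, fℓb, ℓbf⟩ := cBf he hf (hℓB b hb).1
      have hpq : cN e (b * n) := by
        show (1 - e) * (b * n) * e = b * n
        rw [← hf]
        exact cornerMul fb ne
      simp only [LinearMap.sub_apply, tauB b hb, tauN n hn, tauN (b * n) hpq]
      rw [LN (b * n) hpq, LB b hb, LN n hn]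
      refine comb2 (X4 b n hb hn) (Z4 b n hb hn) ?_
      simp only [LinearMap.sub_apply, mul_add, add_mul, mul_sub, sub_mul, mul_assoc, mul_one, one_mul, mul_zero, zero_mul, add_zero, zero_add, sub_zero, zero_sub, sub_self, neg_zero, mul_neg, neg_mul, neg_neg, map_sub, map_add, map_zero, map_neg, he, mar he, hef, mar hef, hfe, mar hfe, hff, mar hff, eb, mar eb, be, mar be, fb, mar fb, bf, mar bf, en, mar en, ne, mar ne, fn, mar fn, nf, mar nf]
      abel
    have caseBB : ∀ b c : G, cB e b → cB e c →
        (L - τ) (b * c) = (L - τ) b * c + b * ((L - τ) c) := by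
      intro b c hb hc
      obtain ⟨eb, be, fb, bf⟩ := cBf he hf hb
      obtain ⟨ec, ce, fc, cf⟩ := cBf he hf hc
      obtain ⟨eℓb, ℓbe, fℓb, ℓbf⟩ := cBf he hf (hℓB b hb).1
      obtain ⟨eℓc, ℓce, fℓc, ℓcf⟩ := cBf he hf (hℓB c hc).1
      have hpq : cB e (b * c) := by
        show (1 - e) * (b * c) * (1 - e) = b * c
        rw [← hf]
        exact cornerMul fb cf
      simp only [LinearMap.sub_apply, tauB b hb, tauB c hc, tauB (b * c) hpq]
      rw [LB (b * c) hpq, LB b hb, LB c hc]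
      refine comb1 (hBB b c hb hc) ?_
      simp only [LinearMap.sub_apply, mul_add, add_mul, mul_sub, sub_mul, mul_assoc, mul_one, one_mul, mul_zero, zero_mul, add_zero, zero_add, sub_zero, zero_sub, sub_self, neg_zero, mul_neg, neg_mul, neg_neg, map_sub, map_add, map_zero, map_neg, he, mar he, hef, mar hef, hfe, mar hfe, hff, mar hff, eb, mar eb, be, mar be, fb, mar fb, bf, mar bf, ec, mar ec, ce, mar ce, fc, mar fc, cf, mar cf]
      abel
    -- decomposition of an arbitrary element
    have hdec : ∀ x : G, x = e * (x * e) + e * (x * f) + (f * (x * e) + f * (x * f)) := by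
      intro x
      rw [hf]
      noncomm_ring
    have hder : IsDer (L - τ) := by
      intro x y
      rw [hdec x, hdec y]
      simp only [mul_add, add_mul, map_add]
      rw [caseAA _ _ (cAe x) (cAe y), caseAM _ _ (cAe x) (cMe y), caseAN _ _ (cAe x) (cNe y),
        caseAB _ _ (cAe x) (cBe y), caseMA _ _ (cMe x) (cAe y), caseMM _ _ (cMe x) (cMe y),
        caseMN _ _ (cMe x) (cNe y), caseMB _ _ (cMe x) (cBe y), caseNA _ _ (cNe x) (cAe y),
        caseNM _ _ (cNe x) (cMe y), caseNN _ _ (cNe x) (cNe y), caseNB _ _ (cNe x) (cBe y),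
        caseBA _ _ (cBe x) (cAe y), caseBM _ _ (cBe x) (cMe y), caseBN _ _ (cBe x) (cNe y),
        caseBB _ _ (cBe x) (cBe y)]
      abel
    refine ⟨L - τ, τ, hder, hτC, ?_, by abel⟩
    intro x y
    have h1 := hder (x * y)  -- dummy
    have key : τ (x * y - y * x) =
        L (x * y - y * x) - ((L - τ) (x * y) - (L - τ) (y * x)) := by
      simp only [map_sub, LinearMap.sub_apply]
      abel
    rw [key, hL x y, hder x y, hder y x]
    simp only [LinearMap.sub_apply, sub_mul, mul_sub, hτC x y, hτC y x]
    abel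
end
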